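/- In a finite T0 topological space X with specialization order ≤ (x ≤ y iff x ∈ cl{y}), a subset A is locally closed if and only if A is convex with respect to ≤ (i.e., x ≤ y ≤ z with x,z ∈ A implies y ∈ A). -/
import Mathlib

lemma mem_closure_fin {X : Type*} [TopologicalSpace X] [Finite X] {S : Set X} {y : X}
    (hy : y ∈ closure S) : ∃ s ∈ S, y ∈ closure {s} := by
  have hS : S.Finite := Set.toFinite S
  have : S = ⋃ s ∈ S, {s} := by simp
  rw [this, hS.closure_biUnion] at hy
  simpa using hy

/-- In a finite `T0` space with specialization order `x ≤ y ↔ x ∈ cl {y}`, a subset is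
locally closed iff it is convex with respect to the specialization order. -/
theorem stmt2 {X : Type*} [TopologicalSpace X] [Finite X] [T0Space X] (A : Set X) :
    (∃ U C : Set X, IsOpen U ∧ IsClosed C ∧ A = U ∩ C) ↔
      ∀ x y z : X, x ∈ closure {y} → y ∈ closure {z} → x ∈ A → z ∈ A → y ∈ A := by
  constructor
  · rintro ⟨U, C, hU, hC, rfl⟩ x y z hxy hyz hx hz
    constructor
    · -- y ∈ U since x ∈ closure {y} and x ∈ U open
      have := mem_closure_iff.mp hxy U hU hx.1
      simpa using this
    · -- y ∈ C since y ∈ closure {z} ⊆ closure C = C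
      have : closure {z} ⊆ C := hC.closure_subset_iff.mpr (Set.singleton_subset_iff.mpr hz.2)
      exact this hyz
  · intro h
    refine ⟨(closure A \ A)ᶜ, closure A, ?_, isClosed_closure, ?_⟩
    · rw [isOpen_compl_iff]
      rw [← closure_subset_iff_isClosed]
      intro y hy
      obtain ⟨d, hd, hyd⟩ := mem_closure_fin hy
      refine ⟨(closure_minimal (Set.singleton_subset_iff.mpr hd.1) isClosed_closure) hyd, ?_⟩
      intro hyA
      obtain ⟨a, ha, hda⟩ := mem_closure_fin hd.1
      exact hd.2 (h y d a hyd hda hyA ha)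
    · ext x
      constructor
      · intro hx
        exact ⟨fun hc => hc.2 hx, subset_closure hx⟩
      · rintro ⟨hx1, hx2⟩
        by_contra hxa
        exact hx1 ⟨hx2, hxa⟩
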